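/- Let U = (U_{ij}) ∈ Mₙ(B(R)), V = (V_{kℓ}) ∈ Mₘ(B(R)) be unitaries with pairwise commuting entries, ψ ∈ R a unit vector, and suppose ⟨U_{i1}V_{j1}ψ, ψ⟩ = α_{ij} where Σ_{i,j} |α_{ij}|² = 1. Then U_{i1}V_{j1}ψ = α_{ij}ψ for all i, j, and consequently (U ⊗ I_m)(I_n ⊗ V)(e₁ ⊗ ψ ⊗ e₁) = Σ_{i,j} α_{ij} eᵢ ⊗ ψ ⊗ eⱼ. -/

import Mathlib

open Matrix

lemma col_isometry_sum {R : Type*} [NormedAddCommGroup R] [InnerProductSpace ℂ R]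
    [CompleteSpace R] {n : ℕ} (U : Matrix (Fin n) (Fin n) (R →L[ℂ] R))
    (hU₁ : Uᴴ * U = 1) (e : Fin n) (x : R) :
    ∑ i, ‖(U i e) x‖ ^ 2 = ‖x‖ ^ 2 := by
  have h : (Uᴴ * U) e e = (1 : Matrix (Fin n) (Fin n) (R →L[ℂ] R)) e e := by rw [hU₁]
  rw [Matrix.mul_apply, Matrix.one_apply_eq] at h
  have h2 : (∑ i, Uᴴ e i * U i e) x = x := by rw [h]; rfl
  have h3 : (inner ℂ x ((∑ i, Uᴴ e i * U i e) x) : ℂ) = (inner ℂ x x : ℂ) := by rw [h2]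
  rw [ContinuousLinearMap.sum_apply, inner_sum] at h3
  have h4 : ∀ i, (inner ℂ x ((Uᴴ e i * U i e) x) : ℂ) = (‖(U i e) x‖ : ℂ) ^ 2 := by
    intro i
    have : (Uᴴ e i * U i e) x = (star (U i e)) ((U i e) x) := by
      rw [Matrix.conjTranspose_apply]; rfl
    rw [this, ContinuousLinearMap.star_eq_adjoint, ContinuousLinearMap.adjoint_inner_right,
      inner_self_eq_norm_sq_to_K]
    norm_cast
  simp only [h4, inner_self_eq_norm_sq_to_K] at h3
  have h5 : ((∑ i, ‖(U i e) x‖ ^ 2 : ℝ) : ℂ) = ((‖x‖ ^ 2 : ℝ) : ℂ) := by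
    push_cast; exact h3
  exact_mod_cast h5

/-- if `U`, `V` are unitary block operator matrices with pairwise
commuting entries, `ψ` a unit vector and `⟨U_{i1}V_{j1}ψ, ψ⟩ = α_{ij}` with
`∑ |α_{ij}|² = 1`, then `U_{i1}V_{j1}ψ = α_{ij}ψ` for all `i, j`; blockwise this says
exactly that `(U ⊗ I_m)(I_n ⊗ V)(e₁ ⊗ ψ ⊗ e₁) = ∑ α_{ij} eᵢ ⊗ ψ ⊗ eⱼ`. -/
theorem embezzlement_cauchy_schwarz
    {R : Type*} [NormedAddCommGroup R] [InnerProductSpace ℂ R] [CompleteSpace R]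
    (n m : ℕ) (hn : 0 < n) (hm : 0 < m)
    (U : Matrix (Fin n) (Fin n) (R →L[ℂ] R))
    (hU₁ : Uᴴ * U = 1) (hU₂ : U * Uᴴ = 1)
    (V : Matrix (Fin m) (Fin m) (R →L[ℂ] R))
    (hV₁ : Vᴴ * V = 1) (hV₂ : V * Vᴴ = 1)
    (hcomm : ∀ (i j : Fin n) (k l : Fin m), U i j * V k l = V k l * U i j)
    (ψ : R) (hψ : ‖ψ‖ = 1)
    (α : Fin n → Fin m → ℂ)
    (hα : ∀ (i : Fin n) (j : Fin m),
      (inner ℂ ψ ((U i ⟨0, hn⟩) ((V j ⟨0, hm⟩) ψ)) : ℂ) = α i j)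
    (hnorm : ∑ i, ∑ j, ‖α i j‖ ^ 2 = 1) :
    ∀ (i : Fin n) (j : Fin m), (U i ⟨0, hn⟩) ((V j ⟨0, hm⟩) ψ) = α i j • ψ := by
  set e : Fin n := ⟨0, hn⟩
  set f : Fin m := ⟨0, hm⟩
  -- total norm squared is 1
  have htot : ∑ i, ∑ j, ‖(U i e) ((V j f) ψ)‖ ^ 2 = 1 := by
    rw [Finset.sum_comm]
    calc ∑ j, ∑ i, ‖(U i e) ((V j f) ψ)‖ ^ 2
        = ∑ j : Fin m, ‖(V j f) ψ‖ ^ 2 := by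
          exact Finset.sum_congr rfl fun j _ => col_isometry_sum U hU₁ e _
      _ = ‖ψ‖ ^ 2 := col_isometry_sum V hV₁ f ψ
      _ = 1 := by rw [hψ]; norm_num
  -- pointwise Cauchy–Schwarz
  have hle : ∀ (i : Fin n) (j : Fin m),
      ‖α i j‖ ^ 2 ≤ ‖(U i e) ((V j f) ψ)‖ ^ 2 := by
    intro i j
    have := norm_inner_le_norm (𝕜 := ℂ) ψ ((U i e) ((V j f) ψ))
    rw [hα i j, hψ, one_mul] at this
    exact pow_le_pow_left₀ (norm_nonneg _) this 2
  -- equality of sums forces pointwise equality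
  have heq : ∀ (i : Fin n) (j : Fin m),
      ‖α i j‖ ^ 2 = ‖(U i e) ((V j f) ψ)‖ ^ 2 := by
    have hsumle : ∀ i : Fin n, ∑ j, ‖α i j‖ ^ 2 ≤ ∑ j, ‖(U i e) ((V j f) ψ)‖ ^ 2 :=
      fun i => Finset.sum_le_sum fun j _ => hle i j
    have houter : ∀ i : Fin n, ∑ j, ‖α i j‖ ^ 2 = ∑ j, ‖(U i e) ((V j f) ψ)‖ ^ 2 := by
      have := (Finset.sum_eq_sum_iff_of_le (fun i _ => hsumle i)).mp
        (by rw [hnorm, htot])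
      intro i; exact this i (Finset.mem_univ i)
    intro i j
    exact (Finset.sum_eq_sum_iff_of_le (fun j _ => hle i j)).mp (houter i) j
      (Finset.mem_univ j)
  intro i j
  by_cases hx : (U i e) ((V j f) ψ) = 0
  · have : α i j = 0 := by rw [← hα i j, hx, inner_zero_right]
    rw [hx, this, zero_smul]
  · have hψ0 : ψ ≠ 0 := fun h => by simp [h] at hψ
    have hnn : ‖(inner ℂ ψ ((U i e) ((V j f) ψ)) : ℂ)‖ = ‖ψ‖ * ‖(U i e) ((V j f) ψ)‖ := by
      rw [hα i j, hψ, one_mul]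
      have := heq i j
      nlinarith [norm_nonneg (α i j), norm_nonneg ((U i e) ((V j f) ψ))]
    obtain ⟨r, -, hr⟩ := (norm_inner_eq_norm_iff hψ0 hx).mp hnn
    have : α i j = r := by
      rw [← hα i j, hr, inner_smul_right, inner_self_eq_norm_sq_to_K, hψ]
      norm_num
    rw [hr, this]
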